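/- The Carlitz q-Fibonacci polynomials, defined by the recurrence F_n(x,s,q) = x F_{n-1}(x,s,q) + q^{n-2} s F_{n-2}(x,s,q) with F_0 = 0, F_1 = 1, have the explicit form F_n(x,s,q) = Σ_{k=0}^{⌊(n-1)/2⌋} q^{k²} [n-1-k choose k]_q s^k x^{n-1-2k}, where [· choose ·]_q is the Gaussian binomial coefficient. -/
import Mathlib

def gaussBinom {R : Type*} [CommRing R] (q : R) : ℕ → ℕ → R
  | _, 0 => 1
  | 0, _ + 1 => 0
  | n + 1, k + 1 => q ^ (k + 1) * gaussBinom q n (k + 1) + gaussBinom q n k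

def carlitzFib {R : Type*} [CommRing R] (x s q : R) : ℕ → R
  | 0 => 0
  | 1 => 1
  | n + 2 => x * carlitzFib x s q (n + 1) + q ^ n * s * carlitzFib x s q n

section
variable {R : Type*} [CommRing R] (q : R)

lemma gaussBinom_succ (m k : ℕ) :
    gaussBinom q (m+1) (k+1) = q ^ (k+1) * gaussBinom q m (k+1) + gaussBinom q m k := rfl

lemma gaussBinom_zero_right (m : ℕ) : gaussBinom q m 0 = 1 := by
  cases m <;> rfl

lemma gaussBinom_eq_zero : ∀ m k : ℕ, m < k → gaussBinom q m k = 0 := by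
  intro m
  induction m with
  | zero => intro k hk; match k, hk with | k+1, _ => rfl
  | succ m ih =>
    intro k hk
    match k, hk with
    | k+1, hk =>
      rw [gaussBinom_succ, ih (k+1) (by omega), ih k (by omega)]
      ring

lemma gaussBinom_pascal : ∀ n k j : ℕ, k + j = n →
    gaussBinom q (k+j+1) (k+1) = gaussBinom q (k+j) (k+1) + q ^ j * gaussBinom q (k+j) k := by
  intro n
  induction n using Nat.strong_induction_on with
  | _ n ih =>
    intro k j hn
    cases j with
    | zero =>
      simp only [Nat.add_zero, pow_zero, one_mul]
      rw [gaussBinom_succ, gaussBinom_eq_zero q k (k+1) (by omega)]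
      ring
    | succ j' =>
      have e1 : gaussBinom q (k+(j'+1)+1) (k+1)
          = q ^ (k+1) * gaussBinom q (k+j'+1) (k+1) + gaussBinom q (k+j'+1) k := by
        rw [show k+(j'+1)+1 = (k+j'+1)+1 by omega, gaussBinom_succ]
      have e2 : gaussBinom q (k+j'+1) (k+1)
          = gaussBinom q (k+j') (k+1) + q ^ j' * gaussBinom q (k+j') k :=
        ih (k+j') (by omega) k j' rfl
      have e2' : gaussBinom q (k+j'+1) (k+1)
          = q ^ (k+1) * gaussBinom q (k+j') (k+1) + gaussBinom q (k+j') k :=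
        gaussBinom_succ q (k+j') k
      cases k with
      | zero =>
        simp only [Nat.zero_add] at *
        simp only [gaussBinom_zero_right] at e1 e2 e2' ⊢
        linear_combination e1 + q^1 * e2 - e2'
      | succ k'' =>
        have e3 : gaussBinom q (k''+(j'+1)+1) (k''+1)
            = gaussBinom q (k''+(j'+1)) (k''+1) + q ^ (j'+1) * gaussBinom q (k''+(j'+1)) k'' :=
          ih (k''+(j'+1)) (by omega) k'' (j'+1) rfl
        have e4 : gaussBinom q (k''+j'+1+1) (k''+1)
            = q ^ (k''+1) * gaussBinom q (k''+j'+1) (k''+1) + gaussBinom q (k''+j'+1) k'' :=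
          gaussBinom_succ q (k''+j'+1) k''
        rw [show k''+(j'+1)+1 = k''+j'+1+1 by omega, show k''+(j'+1) = k''+j'+1 by omega] at e3
        rw [show k''+1+(j'+1)+1 = k''+j'+1+1+1 by omega, show k''+1+(j'+1) = k''+j'+1+1 by omega,
            show k''+1+j'+1 = k''+j'+1+1 by omega, show k''+1+j' = k''+j'+1 by omega] at *
        linear_combination e1 + q^(k''+2) * e2 - e2' + e3 - q^(j'+1) * e4

lemma carlitz_key (x s : R) : ∀ n : ℕ, carlitzFib x s q (n+1) =
    ∑ k ∈ Finset.range (n+1), q ^ (k^2) * gaussBinom q (n-k) k * s^k * x^(n-2*k) := by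
  intro n
  induction n using Nat.twoStepInduction with
  | zero => simp [carlitzFib, gaussBinom]
  | one =>
    show carlitzFib x s q 2 = _
    rw [show carlitzFib x s q 2
        = x * carlitzFib x s q 1 + q ^ 0 * s * carlitzFib x s q 0 from rfl]
    simp [carlitzFib, Finset.sum_range_succ, gaussBinom_zero_right,
      gaussBinom_eq_zero q 0 1 (by omega)]
  | more m ih1 ih2 =>
    show carlitzFib x s q (m+3) = _
    rw [show carlitzFib x s q (m+3)
        = x * carlitzFib x s q (m+2) + q ^ (m+1) * s * carlitzFib x s q (m+1) from rfl,
      ih1, ih2, Finset.mul_sum, Finset.mul_sum]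
    rw [show m+2+1 = (m+2)+1 from rfl, Finset.sum_range_succ' _ (m+2),
        Finset.sum_range_succ' _ (m+1), Finset.sum_range_succ _ (m+1)]
    have hzero : q ^ ((m+2)^2) * gaussBinom q (m+2-(m+2)) (m+2) * s^(m+2) * x^(m+2-2*(m+2)) = 0 := by
      rw [Nat.sub_self, gaussBinom_eq_zero q 0 (m+2) (by omega)]; ring
    rw [hzero]
    have hmain : ∀ i ∈ Finset.range (m+1),
        x * (q ^ ((i+1)^2) * gaussBinom q (m+1-(i+1)) (i+1) * s^(i+1) * x^(m+1-2*(i+1)))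
          = q ^ ((i+1)^2) * gaussBinom q (m+2-(i+1)) (i+1) * s^(i+1) * x^(m+2-2*(i+1))
            - q ^ (m+1) * s * (q ^ (i^2) * gaussBinom q (m-i) i * s^i * x^(m-2*i)) := by
      intro i hi
      rw [Finset.mem_range] at hi
      rcases Nat.lt_or_ge (2*i) m with hlt | hge
      · obtain ⟨t, rfl⟩ : ∃ t, m = 2*i+t+1 := ⟨m - (2*i+1), by omega⟩
        have hp := gaussBinom_pascal q (i+(t+1)) i (t+1) rfl
        rw [show i+(t+1)+1 = 2*i+t+1+2-(i+1) by omega,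
            show i+(t+1) = 2*i+t+1+1-(i+1) by omega] at hp
        rw [hp, show 2*i+t+1+1-(i+1) = i+t+1 by omega,
            show 2*i+t+1+1-2*(i+1) = t by omega,
            show 2*i+t+1+2-2*(i+1) = t+1 by omega, show 2*i+t+1-2*i = t+1 by omega,
            show 2*i+t+1-i = i+t+1 by omega, show (i+1)^2 = i^2+2*i+1 by ring]
        ring
      · rcases Nat.eq_or_lt_of_le hge with heq | hlt2
        · subst heq
          have hp := gaussBinom_pascal q i i 0 rfl
          simp only [Nat.add_zero, pow_zero, one_mul] at hp
          rw [gaussBinom_eq_zero q i (i+1) (by omega)] at hp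
          rw [show 2*i+1-(i+1) = i by omega, show 2*i+2-(i+1) = i+1 by omega,
              show 2*i+1-2*(i+1) = 0 by omega, show 2*i+2-2*(i+1) = 0 by omega,
              show 2*i-2*i = 0 by omega, show 2*i-i = i by omega, hp,
              gaussBinom_eq_zero q i (i+1) (by omega),
              show (i+1)^2 = i^2+2*i+1 by ring]
          ring
        · have h1 : gaussBinom q (m+1-(i+1)) (i+1) = 0 :=
            gaussBinom_eq_zero q _ _ (by omega)
          have h2 : gaussBinom q (m+2-(i+1)) (i+1) = 0 :=
            gaussBinom_eq_zero q _ _ (by omega)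
          have h3 : gaussBinom q (m-i) i = 0 :=
            gaussBinom_eq_zero q _ _ (by omega)
          rw [h1, h2, h3]; ring
    rw [Finset.sum_congr rfl hmain]
    rw [show m+1-0 = m+1 from rfl, show m+2-0 = m+2 from rfl]
    simp only [gaussBinom_zero_right]
    rw [Finset.sum_sub_distrib]
    ring
end

theorem carlitzFib_explicit {R : Type*} [CommRing R] (x s q : R) (n : ℕ) (hn : 1 ≤ n) :
    carlitzFib x s q n =
      ∑ k ∈ Finset.range ((n - 1) / 2 + 1),
        q ^ (k ^ 2) * gaussBinom q (n - 1 - k) k * s ^ k * x ^ (n - 1 - 2 * k) := by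
  obtain ⟨m, rfl⟩ : ∃ m, n = m + 1 := ⟨n - 1, by omega⟩
  rw [carlitz_key q x s m]
  simp only [Nat.add_sub_cancel]
  refine (Finset.sum_subset (Finset.range_subset_range.mpr (by omega)) ?_).symm
  intro k hk hk'
  rw [Finset.mem_range] at hk hk'
  rw [gaussBinom_eq_zero q (m - k) k (by omega)]
  ring
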